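/- PLIS ⊆ PLSIS: every Boolean function family (f_n)_{n∈ℕ} that belongs to PLIS also belongs to PLSIS. -/

import Mathlib

/-- Boolean register names: `inp i` is input register `in:(i+1)`,
`aux i` is auxiliary register `aux:(i+1)`, `out` is the output register. -/
inductive Reg where
  | inp : ℕ → Reg
  | aux : ℕ → Reg
  | out : Reg
deriving DecidableEq

/-- Basic instructions: register reads/writes, and (for splitting instruction
sequences) `split p` and `reply p` for Boolean parameters `p`. -/
inductive BInstr where
  | get : Reg → BInstr
  | set : Reg → Bool → BInstr
  | split : ℕ → BInstr
  | reply : ℕ → BInstr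
deriving DecidableEq

/-- Primitive instructions. -/
inductive PInstr where
  | plain : BInstr → PInstr
  | pos : BInstr → PInstr
  | neg : BInstr → PInstr
  | jump : ℕ → PInstr
  | halt : PInstr
deriving DecidableEq

abbrev RegState := Reg → Bool

/-- State change caused by processing a basic instruction. -/
def BInstr.effect : BInstr → RegState → RegState
  | .set r b, s => Function.update s r b
  | _, s => s

/-- Reply produced by processing a basic instruction. -/
def BInstr.rpl : BInstr → RegState → Bool
  | .get r, s => s r
  | .set _ b, _ => b
  | _, _ => false

def BInstr.isSplitReply : BInstr → Bool
  | .split _ => true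
  | .reply _ => true
  | _ => false

/-- Single-thread execution of an instruction sequence on Boolean registers;
`none` means deadlock, `some s` means termination in register state `s`.
(`split`/`reply` instructions make no sense here and deadlock.) -/
def exec : List PInstr → RegState → Option RegState
  | [], _ => none
  | .plain a :: X, s =>
      if a.isSplitReply then none else exec X (a.effect s)
  | .pos a :: X, s =>
      if a.isSplitReply then none
      else if a.rpl s then exec X (a.effect s) else exec (X.drop 1) (a.effect s)
  | .neg a :: X, s =>
      if a.isSplitReply then none
      else if a.rpl s then exec (X.drop 1) (a.effect s) else exec X (a.effect s)
  | .jump 0 :: _, _ => none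
  | .jump (l+1) :: X, s => exec (X.drop l) s
  | .halt :: _, s => some s
termination_by X _ => X.length
decreasing_by all_goals (simp only [List.length_drop, List.length_cons]; omega)

/-- Initial register state: input registers `in:1 .. in:n` contain
`b 0, ..., b (n-1)`; all other registers contain `false`. -/
def initState (n : ℕ) (b : Fin n → Bool) : RegState := fun r =>
  match r with
  | .inp i => if h : i < n then b ⟨i, h⟩ else false
  | _ => false

/-- `X` computes the `n`-ary Boolean function `f`: for every input, execution
terminates (does not deadlock) with the output register containing `f b`. -/
def Computes {n : ℕ} (f : (Fin n → Bool) → Bool) (X : List PInstr) : Prop :=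
  ∀ b : Fin n → Bool, ∃ s : RegState,
    exec X (initState n b) = some s ∧ s Reg.out = f b

/-- Basic instructions allowed in `IS_br`. -/
def BrBasic : BInstr → Prop
  | .get (.inp _) => True
  | .get (.aux _) => True
  | .set (.aux _) _ => True
  | .set .out _ => True
  | _ => False

/-- Basic instructions allowed in `IS_br^na`. -/
def NaBasic : BInstr → Prop
  | .get (.inp _) => True
  | .set .out _ => True
  | _ => False

def InstrBasicOK (P : BInstr → Prop) : PInstr → Prop
  | .plain a => P a
  | .pos a => P a
  | .neg a => P a
  | _ => True

/-- Membership of `IS_br` (non-empty, only allowed basic instructions). -/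
def ISbr (X : List PInstr) : Prop :=
  X ≠ [] ∧ ∀ u ∈ X, InstrBasicOK BrBasic u

/-- Membership of `IS_br^na`. -/
def ISbrna (X : List PInstr) : Prop :=
  X ≠ [] ∧ ∀ u ∈ X, InstrBasicOK NaBasic u

/-- The primitive instruction contains the basic instruction `out.set:false`. -/
def UsesOutSetFalse : PInstr → Prop
  | .plain (.set .out false) => True
  | .pos (.set .out false) => True
  | .neg (.set .out false) => True
  | _ => False

/-- The class PLIS of Boolean function families computable by
polynomial-length instruction sequences from `IS_br`. -/
def PLIS (F : (n : ℕ) → (Fin n → Bool) → Bool) : Prop :=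
  ∃ h : Polynomial ℕ, ∀ n : ℕ, ∃ X : List PInstr,
    ISbr X ∧ Computes (F n) X ∧ X.length ≤ h.eval n

/-- Basic instructions allowed in `SIS_br`. -/
def SisBasic : BInstr → Prop
  | .get (.inp _) => True
  | .set .out true => True
  | .split _ => True
  | .reply _ => True
  | _ => False

/-- Membership of `SIS_br`. -/
def SISbr (X : List PInstr) : Prop :=
  X ≠ [] ∧ ∀ u ∈ X, InstrBasicOK SisBasic u

/-- A (partial) instantiation of the Boolean parameters. -/
abbrev PEnv := ℕ → Option Bool

/-- Fueled cyclic-interleaving execution of a vector of threads (each a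
remaining instruction sequence with a parameter instantiation) sharing the
Boolean registers.  `none` means deadlock (or not enough fuel), `some s`
means successful termination of all threads in register state `s`. -/
def sexec : ℕ → List (List PInstr × PEnv) → RegState → Option RegState
  | 0, _, _ => none
  | _ + 1, [], s => some s
  | fuel + 1, (is, ρ) :: ts, s =>
    match is with
    | [] => none
    | .halt :: _ => sexec fuel ts s
    | .jump 0 :: _ => none
    | .jump (l+1) :: X => sexec fuel ((X.drop l, ρ) :: ts) s
    | .plain a :: X =>
      match a with
      | .split p =>
        match ρ p with
        | some _ => none
        | none => sexec fuel
            (ts ++ [(X, Function.update ρ p (some true)),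
                    (X, Function.update ρ p (some false))]) s
      | .reply p =>
        match ρ p with
        | none => none
        | some _ => sexec fuel (ts ++ [(X, ρ)]) s
      | _ => sexec fuel (ts ++ [(X, ρ)]) (a.effect s)
    | .pos a :: X =>
      match a with
      | .split p =>
        match ρ p with
        | some _ => none
        | none => sexec fuel
            (ts ++ [(X, Function.update ρ p (some true)),
                    (X.drop 1, Function.update ρ p (some false))]) s
      | .reply p =>
        match ρ p with
        | none => none
        | some b => sexec fuel (ts ++ [(if b then X else X.drop 1, ρ)]) s
      | _ => sexec fuel (ts ++ [(if a.rpl s then X else X.drop 1, ρ)]) (a.effect s)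
    | .neg a :: X =>
      match a with
      | .split p =>
        match ρ p with
        | some _ => none
        | none => sexec fuel
            (ts ++ [(X.drop 1, Function.update ρ p (some true)),
                    (X, Function.update ρ p (some false))]) s
      | .reply p =>
        match ρ p with
        | none => none
        | some b => sexec fuel (ts ++ [(if b then X.drop 1 else X, ρ)]) s
      | _ => sexec fuel (ts ++ [(if a.rpl s then X.drop 1 else X, ρ)]) (a.effect s)

/-- `X` splitting computes the `n`-ary Boolean function `f`. -/
def SplittingComputes {n : ℕ} (f : (Fin n → Bool) → Bool) (X : List PInstr) : Prop :=
  ∀ b : Fin n → Bool, ∃ (fuel : ℕ) (s : RegState),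
    sexec fuel [(X, fun _ => none)] (initState n b) = some s ∧ s Reg.out = f b

/-- The class PLSIS of Boolean function families splitting computable by
polynomial-length instruction sequences from `SIS_br`. -/
def PLSIS (F : (n : ℕ) → (Fin n → Bool) → Bool) : Prop :=
  ∃ h : Polynomial ℕ, ∀ n : ℕ, ∃ X : List PInstr,
    SISbr X ∧ SplittingComputes (F n) X ∧ X.length ≤ h.eval n

namespace S6

abbrev Thr := List PInstr × PEnv

def wt (ts : List Thr) : ℕ := (ts.map (fun t => 3 ^ t.1.length)).sum

@[simp] lemma wt_nil : wt [] = 0 := rfl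
@[simp] lemma wt_cons (t : Thr) (ts) : wt (t :: ts) = 3 ^ t.1.length + wt ts := rfl
@[simp] lemma wt_append (ts us : List Thr) : wt (ts ++ us) = wt ts + wt us := by
  simp [wt]

inductive Safe (inp : ℕ → Bool) (v : Bool) : Bool → List PInstr → PEnv → Prop where
  | halt {m X ρ} (hm : m = true → v = false) : Safe inp v m (.halt :: X) ρ
  | jump {m ρ} (l X) (h : Safe inp v m (X.drop l) ρ) : Safe inp v m (.jump (l+1) :: X) ρ
  | getpos {m ρ} (i X) (h : Safe inp v m (if inp i then X else X.drop 1) ρ) :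
      Safe inp v m (.pos (.get (.inp i)) :: X) ρ
  | setout {m ρ} (X) (hv : v = true) (h : Safe inp v false X ρ) :
      Safe inp v m (.plain (.set .out true) :: X) ρ
  | splitpos {m ρ} (p X mt mf) (hp : ρ p = none) (hm : m = true → (mt || mf) = true)
      (h1 : Safe inp v mt X (Function.update ρ p (some true)))
      (h2 : Safe inp v mf (X.drop 1) (Function.update ρ p (some false))) :
      Safe inp v m (.pos (.split p) :: X) ρ
  | replypos {m ρ} (p b X) (hp : ρ p = some b)
      (h : Safe inp v m (if b then X else X.drop 1) ρ) :
      Safe inp v m (.pos (.reply p) :: X) ρ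

lemma safe_ne_nil {inp v m X ρ} (h : Safe inp v m X ρ) : X ≠ [] := by
  cases h <;> simp

lemma safe_len_pos {inp v m X ρ} (h : Safe inp v m X ρ) : 1 ≤ X.length := by
  have := safe_ne_nil h
  cases X <;> simp_all

lemma pow3_lt {a b : ℕ} (h : a ≤ b) : 3 ^ a + 3 ^ (a - 1) < 3 ^ (b + 1) := by
  have h1 : 3 ^ (a - 1) ≤ 3 ^ a := Nat.pow_le_pow_right (by norm_num) (Nat.sub_le _ _)
  have h2 : 3 ^ a ≤ 3 ^ b := Nat.pow_le_pow_right (by norm_num) h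
  have h3 : 0 < 3 ^ b := Nat.pow_pos (by norm_num)
  calc 3 ^ a + 3 ^ (a-1) ≤ 2 * 3 ^ a := by omega
    _ ≤ 2 * 3 ^ b := by omega
    _ < 3 ^ (b+1) := by rw [pow_succ]; omega

lemma sched (inp : ℕ → Bool) (v : Bool) :
    ∀ N (ts : List Thr) (s : RegState), wt ts ≤ N →
    (∀ t ∈ ts, ∃ m, Safe inp v m t.1 t.2) →
    (∀ i, s (.inp i) = inp i) →
    ∃ fuel s', sexec fuel ts s = some s' ∧
      (s Reg.out = true → s' Reg.out = true) ∧
      (s' Reg.out = true → s Reg.out = true ∨ v = true) ∧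
      (v = true → (∃ t ∈ ts, Safe inp v true t.1 t.2) → s' Reg.out = true) := by
  intro N
  induction N using Nat.strong_induction_on with
  | _ N IH =>
    intro ts s hwt hsafe hinp
    match ts with
    | [] =>
      refine ⟨1, s, rfl, fun h => h, fun h => Or.inl h, ?_⟩
      rintro _ ⟨t, ht, -⟩; exact absurd ht (List.not_mem_nil)
    | (is, ρ) :: ts' =>
      obtain ⟨m₀, hm₀⟩ := hsafe _ (List.mem_cons_self)
      simp only at hm₀
      have hN : 1 ≤ N := by
        have : 1 ≤ wt ((is, ρ) :: ts') := by
          have : 0 < 3 ^ is.length := Nat.pow_pos (by norm_num)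
          simp; omega
        omega
      have hts' : ∀ t ∈ ts', ∃ m, Safe inp v m t.1 t.2 :=
        fun t ht => hsafe t (List.mem_cons_of_mem _ ht)
      cases hm₀ with
      | halt hm =>
        rename_i X
        obtain ⟨f, s', he, c1, c2, c3⟩ := IH (N-1) (by omega) ts' s
          (by simp at hwt ⊢; have : 0 < 3 ^ (X.length + 1) := Nat.pow_pos (by norm_num); omega)
          hts' hinp
        refine ⟨f + 1, s', ?_, c1, c2, ?_⟩
        · simpa only [sexec] using he
        · rintro hv ⟨t, ht, hw⟩
          rcases List.mem_cons.mp ht with rfl | ht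
          · cases hw with
            | halt hm' => simp [hm' rfl] at hv
          · exact c3 hv ⟨t, ht, hw⟩
      | jump l X h =>
        have hwt' : wt ((X.drop l, ρ) :: ts') ≤ N - 1 := by
          have hlt : 3 ^ (X.drop l).length < 3 ^ (X.length + 1) :=
            Nat.pow_lt_pow_right (by norm_num) (by simp)
          simp at hwt hlt ⊢; omega
        obtain ⟨f, s', he, c1, c2, c3⟩ := IH (N-1) (by omega) _ s hwt'
          (by intro t ht
              rcases List.mem_cons.mp ht with rfl | ht
              exacts [⟨_, h⟩, hts' t ht]) hinp
        refine ⟨f + 1, s', ?_, c1, c2, ?_⟩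
        · simpa only [sexec] using he
        · rintro hv ⟨t, ht, hw⟩
          rcases List.mem_cons.mp ht with rfl | ht
          · cases hw with
            | jump _ _ h' => exact c3 hv ⟨_, List.mem_cons_self, h'⟩
          · exact c3 hv ⟨t, List.mem_cons_of_mem _ ht, hw⟩
      | getpos i X h =>
        set Y := if inp i then X else X.drop 1 with hY
        have hYlen : Y.length ≤ X.length := by
          rw [hY]; split <;> simp
        have hwt' : wt (ts' ++ [(Y, ρ)]) ≤ N - 1 := by
          have hlt : 3 ^ Y.length < 3 ^ (X.length + 1) :=
            Nat.pow_lt_pow_right (by norm_num) (by omega)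
          simp at hwt ⊢; omega
        obtain ⟨f, s', he, c1, c2, c3⟩ := IH (N-1) (by omega) _ s hwt'
          (by intro t ht
              rcases List.mem_append.mp ht with ht | ht
              · exact hts' t ht
              · simp at ht; subst ht; exact ⟨_, h⟩) hinp
        refine ⟨f + 1, s', ?_, c1, c2, ?_⟩
        · have hr : (BInstr.get (Reg.inp i)).rpl s = inp i := hinp i
          simpa only [sexec, BInstr.effect, hr, ← hY] using he
        · rintro hv ⟨t, ht, hw⟩
          rcases List.mem_cons.mp ht with rfl | ht
          · cases hw with
            | getpos _ _ h' =>
              exact c3 hv ⟨(Y, ρ), List.mem_append_right _ (List.mem_cons_self),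
                by rw [hY]; exact h'⟩
          · exact c3 hv ⟨t, List.mem_append_left _ ht, hw⟩
      | setout X hv h =>
        set s₂ := Function.update s Reg.out true with hs₂
        have hs₂out : s₂ Reg.out = true := by simp [hs₂]
        have hs₂inp : ∀ i, s₂ (.inp i) = inp i := by
          intro i; rw [hs₂, Function.update_of_ne (by simp) _ _]; exact hinp i
        have hwt' : wt (ts' ++ [(X, ρ)]) ≤ N - 1 := by
          have hlt : 3 ^ X.length < 3 ^ (X.length + 1) :=
            Nat.pow_lt_pow_right (by norm_num) (by omega)
          simp at hwt ⊢; omega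
        obtain ⟨f, s', he, c1, c2, c3⟩ := IH (N-1) (by omega) _ s₂ hwt'
          (by intro t ht
              rcases List.mem_append.mp ht with ht | ht
              · exact hts' t ht
              · simp at ht; subst ht; exact ⟨_, h⟩) hs₂inp
        refine ⟨f + 1, s', ?_, fun _ => c1 hs₂out, fun _ => Or.inr hv, fun _ _ => c1 hs₂out⟩
        simpa only [sexec, BInstr.effect, BInstr.isSplitReply, ← hs₂] using he
      | splitpos p X mt mf hp hm h1 h2 =>
        have hX1 : 1 ≤ X.length := safe_len_pos h1
        have hwt' : wt (ts' ++ [(X, Function.update ρ p (some true)),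
            (X.drop 1, Function.update ρ p (some false))]) ≤ N - 1 := by
          have hlt := pow3_lt (le_refl X.length)
          simp at hwt ⊢; omega
        obtain ⟨f, s', he, c1, c2, c3⟩ := IH (N-1) (by omega) _ s hwt'
          (by intro t ht
              rcases List.mem_append.mp ht with ht | ht
              · exact hts' t ht
              · rcases List.mem_cons.mp ht with rfl | ht
                · exact ⟨_, h1⟩
                · rcases List.mem_cons.mp ht with rfl | ht
                  · exact ⟨_, h2⟩
                  · exact absurd ht List.not_mem_nil) hinp
        refine ⟨f + 1, s', ?_, c1, c2, ?_⟩
        · simpa only [sexec, hp] using he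
        · rintro hv ⟨t, ht, hw⟩
          rcases List.mem_cons.mp ht with rfl | ht
          · cases hw with
            | splitpos _ _ mt' mf' hp' hm' h1' h2' =>
              rcases Bool.or_eq_true _ _ |>.mp (hm' rfl) with hb | hb
              · subst hb
                exact c3 hv ⟨_, List.mem_append_right _ (List.mem_cons_self), h1'⟩
              · subst hb
                exact c3 hv ⟨_, List.mem_append_right _
                  (List.mem_cons_of_mem _ (List.mem_cons_self)), h2'⟩
          · exact c3 hv ⟨t, List.mem_append_left _ ht, hw⟩
      | replypos p b X hp h =>
        set Y := if b then X else X.drop 1 with hY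
        have hYlen : Y.length ≤ X.length := by rw [hY]; split <;> simp
        have hwt' : wt (ts' ++ [(Y, ρ)]) ≤ N - 1 := by
          have hlt : 3 ^ Y.length < 3 ^ (X.length + 1) :=
            Nat.pow_lt_pow_right (by norm_num) (by omega)
          simp at hwt ⊢; omega
        obtain ⟨f, s', he, c1, c2, c3⟩ := IH (N-1) (by omega) _ s hwt'
          (by intro t ht
              rcases List.mem_append.mp ht with ht | ht
              · exact hts' t ht
              · simp at ht; subst ht; exact ⟨_, h⟩) hinp
        refine ⟨f + 1, s', ?_, c1, c2, ?_⟩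
        · simpa only [sexec, hp, ← hY] using he
        · rintro hv ⟨t, ht, hw⟩
          rcases List.mem_cons.mp ht with rfl | ht
          · cases hw with
            | replypos _ b' _ hp' h' =>
              have hp'' : ρ p = some b' := hp'
              rw [hp] at hp''
              have hb : b' = b := by cases hp''; rfl
              subst hb
              exact c3 hv ⟨(Y, ρ), List.mem_append_right _ (List.mem_cons_self),
                by rw [hY]; exact h'⟩
          · exact c3 hv ⟨t, List.mem_append_left _ ht, hw⟩

/-! ### Translation to splitting instruction sequences -/

def wEff : Option (Reg × Bool) → RegState → RegState
  | none, s => s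
  | some (r, c), s => Function.update s r c

def Rn (rs : List ℕ) : ℕ := rs.length + 1

lemma Rn_pos (rs : List ℕ) : 1 ≤ Rn rs := Nat.succ_le_succ (Nat.zero_le _)

def regOfSlot (rs : List ℕ) (k : ℕ) : Reg :=
  if h : k < rs.length then .aux rs[k] else .out

def pid (rs : List ℕ) (j k : ℕ) : ℕ := j * Rn rs + k

def SETc (c : Bool) (q : ℕ) : List PInstr :=
  if c then [.pos (.split q), .jump 7, .halt, .halt, .halt, .halt, .halt, .halt]
  else [.pos (.split q), .halt, .jump 6, .halt, .halt, .halt, .halt, .halt]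

def COPY (q p : ℕ) : List PInstr :=
  [.pos (.split q), .jump 4, .pos (.reply p), .halt, .jump 4, .pos (.reply p), .jump 2, .halt]

def specw (w : Option (Reg × Bool)) (rs : List ℕ) (k : ℕ) : Option Bool :=
  match w with
  | some (r, c) => if regOfSlot rs k = r then some c else none
  | none => none

def gadget (rs : List ℕ) (j t k : ℕ) (w : Option (Reg × Bool)) : List PInstr :=
  match specw w rs k with
  | some c => SETc c (pid rs t k)
  | none => COPY (pid rs t k) (pid rs j k)

def gpart (rs : List ℕ) (j t : ℕ) (w : Option (Reg × Bool)) (a : ℕ) : List PInstr :=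
  if _h : a < Rn rs then gadget rs j t a w ++ gpart rs j t w (a+1) else []
termination_by Rn rs - a

def Bn (rs : List ℕ) : ℕ := 16 * Rn rs + 4

def trans (rs : List ℕ) (L j t : ℕ) (w : Option (Reg × Bool)) (o : ℕ) : List PInstr :=
  if t < L then gpart rs j t w 0 ++ [.jump ((t - j) * Bn rs - o - 8 * Rn rs)]
  else List.replicate (8 * Rn rs + 1) .halt

inductive Desc where
  | step : Option (Reg × Bool) → ℕ → Desc
  | branch : Reg → ℕ → ℕ → Desc
  | halt : Desc
  | dead : Desc

def descOf (j : ℕ) : PInstr → Desc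
  | .plain (.get _) => .step none (j+1)
  | .plain (.set r c) => .step (some (r, c)) (j+1)
  | .pos (.get r) => .branch r (j+1) (j+2)
  | .neg (.get r) => .branch r (j+2) (j+1)
  | .pos (.set r c) => .step (some (r, c)) (if c then j+1 else j+2)
  | .neg (.set r c) => .step (some (r, c)) (if c then j+2 else j+1)
  | .jump (l+1) => .step none (j+1+l)
  | .halt => .halt
  | _ => .dead

def testInstr (rs : List ℕ) (j : ℕ) : Reg → PInstr
  | .inp i => .pos (.get (.inp i))
  | .aux i => .pos (.reply (pid rs j (rs.idxOf i)))
  | .out => .halt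

def blockOf (rs : List ℕ) (L j : ℕ) : Desc → List PInstr
  | .step w t => [.jump 1, .jump (8 * Rn rs + 2)] ++ trans rs L j (j+1) none 2
      ++ trans rs L j t w (8 * Rn rs + 3)
  | .branch r tT tF => [testInstr rs j r, .jump (8 * Rn rs + 2)]
      ++ trans rs L j tF none 2 ++ trans rs L j tT none (8 * Rn rs + 3)
  | .halt => [.pos (.reply (pid rs j rs.length)), .jump (8 * Rn rs + 2)]
      ++ (.halt :: List.replicate (8 * Rn rs) .halt)
      ++ ([.plain (.set .out true), .halt] ++ List.replicate (8 * Rn rs - 1) .halt)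
  | .dead => List.replicate (Bn rs) .halt

def bodyc (rs : List ℕ) (X : List PInstr) (j : ℕ) : List PInstr :=
  if h : j < X.length then blockOf rs X.length j (descOf j X[j]) ++ bodyc rs X (j+1)
  else []
termination_by X.length - j

def prologue (rs : List ℕ) (a : ℕ) : List PInstr :=
  if _h : a < Rn rs then SETc false (pid rs 0 a) ++ prologue rs (a+1) else []
termination_by Rn rs - a

def collectB : BInstr → List ℕ
  | .get (.aux i) => [i]
  | .set (.aux i) _ => [i]
  | _ => []

def collect : PInstr → List ℕ
  | .plain a => collectB a
  | .pos a => collectB a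
  | .neg a => collectB a
  | _ => []

def auxIdxs (X : List PInstr) : List ℕ := X.flatMap collect

def transl (X : List PInstr) : List PInstr :=
  prologue (auxIdxs X) 0 ++ bodyc (auxIdxs X) X 0

/-! ### Length lemmas -/

@[simp] lemma SETc_length (c q) : (SETc c q).length = 8 := by cases c <;> rfl

@[simp] lemma COPY_length (q p) : (COPY q p).length = 8 := rfl

@[simp] lemma gadget_length (rs j t k w) : (gadget rs j t k w).length = 8 := by
  cases hs : specw w rs k <;> simp [gadget, hs]

lemma gpart_length (rs j t w) : ∀ n a, Rn rs - a ≤ n →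
    (gpart rs j t w a).length = 8 * (Rn rs - a) := by
  intro n
  induction n with
  | zero =>
    intro a ha
    rw [gpart, dif_neg (by omega)]
    simp; omega
  | succ n IH =>
    intro a ha
    rw [gpart]
    by_cases h : a < Rn rs
    · rw [dif_pos h]
      rw [List.length_append, gadget_length, IH (a+1) (by omega)]
      omega
    · rw [dif_neg h]; simp; omega

@[simp] lemma gpart_length0 (rs j t w) : (gpart rs j t w 0).length = 8 * Rn rs := by
  rw [gpart_length rs j t w (Rn rs) 0 (by omega)]; omega

@[simp] lemma trans_length (rs L j t w o) : (trans rs L j t w o).length = 8 * Rn rs + 1 := by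
  unfold trans; split <;> simp

@[simp] lemma blockOf_length (rs L j d) : (blockOf rs L j d).length = Bn rs := by
  have h1 := Rn_pos rs
  cases d <;> simp [blockOf, Bn] <;> omega

lemma prologue_length (rs) : ∀ n a, Rn rs - a ≤ n →
    (prologue rs a).length = 8 * (Rn rs - a) := by
  intro n
  induction n with
  | zero => intro a ha; rw [prologue, dif_neg (by omega)]; simp; omega
  | succ n IH =>
    intro a ha
    rw [prologue]
    by_cases h : a < Rn rs
    · rw [dif_pos h, List.length_append, SETc_length, IH (a+1) (by omega)]; omega
    · rw [dif_neg h]; simp; omega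

lemma bodyc_length (rs X) : ∀ n j, X.length - j ≤ n →
    (bodyc rs X j).length = (X.length - j) * Bn rs := by
  intro n
  induction n with
  | zero => intro j hj; rw [bodyc, dif_neg (by omega)]; simp; omega
  | succ n IH =>
    intro j hj
    rw [bodyc]
    by_cases h : j < X.length
    · rw [dif_pos h, List.length_append, blockOf_length, IH (j+1) (by omega)]
      have : X.length - j = (X.length - (j+1)) + 1 := by omega
      rw [this]; ring
    · rw [dif_neg h]; simp; omega

lemma bodyc_drop_one (rs X j) : (bodyc rs X j).drop (Bn rs) = bodyc rs X (j+1) := by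
  rw [bodyc]
  by_cases h : j < X.length
  · rw [dif_pos h]
    rw [← blockOf_length rs X.length j (descOf j X[j])]
    exact List.drop_left
  · rw [dif_neg h]
    rw [bodyc, dif_neg (by omega)]
    simp

lemma bodyc_drop (rs X) : ∀ d j, (bodyc rs X j).drop (d * Bn rs) = bodyc rs X (j + d) := by
  intro d
  induction d with
  | zero => intro j; simp
  | succ d IH =>
    intro j
    have : (d + 1) * Bn rs = Bn rs + d * Bn rs := by ring
    rw [this, ← List.drop_drop, bodyc_drop_one]
    rw [IH (j+1)]
    congr 1; omega

/-! ### Safety of the gadgets -/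

def envUpto (rs : List ℕ) (ρ : PEnv) (t : ℕ) (s' : RegState) (a : ℕ) : PEnv :=
  fun p => if t * Rn rs ≤ p ∧ p < t * Rn rs + a then
    some (s' (regOfSlot rs (p - t * Rn rs))) else ρ p

@[simp] lemma envUpto_zero (rs ρ t s') : envUpto rs ρ t s' 0 = ρ := by
  funext p; simp [envUpto]

lemma envUpto_succ (rs ρ t s' a) :
    Function.update (envUpto rs ρ t s' a) (pid rs t a) (some (s' (regOfSlot rs a)))
      = envUpto rs ρ t s' (a + 1) := by
  funext p
  rcases eq_or_ne p (pid rs t a) with rfl | hne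
  · rw [Function.update_self]
    simp only [envUpto, pid]
    simp only [show t * Rn rs ≤ t * Rn rs + a ∧ t * Rn rs + a < t * Rn rs + (a + 1) from by omega, and_self, if_true]
    have : t * Rn rs + a - t * Rn rs = a := by omega
    rw [this]
  · rw [Function.update_of_ne hne]
    simp only [envUpto]
    have hne' : p ≠ t * Rn rs + a := by simpa [pid] using hne
    by_cases h1 : t * Rn rs ≤ p ∧ p < t * Rn rs + a
    · rw [if_pos h1, if_pos ⟨h1.1, by omega⟩]
    · rw [if_neg h1, if_neg (by omega)]

lemma envUpto_out (rs ρ t s' a) {p : ℕ} (hp : ¬ (t * Rn rs ≤ p ∧ p < t * Rn rs + a)) :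
    envUpto rs ρ t s' a p = ρ p := by
  simp only [envUpto]; rw [if_neg hp]

lemma pid_out_range (rs : List ℕ) {j t a : ℕ} (h : j ≠ t) (ha : a < Rn rs) (a' : ℕ)
    (ha' : a' ≤ Rn rs) :
    ¬ (t * Rn rs ≤ pid rs j a ∧ pid rs j a < t * Rn rs + a') := by
  rcases h.lt_or_gt with hlt | hlt
  · have h1 : (j + 1) * Rn rs ≤ t * Rn rs := Nat.mul_le_mul_right _ hlt
    have : pid rs j a < t * Rn rs := by
      have : pid rs j a < (j + 1) * Rn rs := by simp [pid, add_mul]; omega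
      omega
    omega
  · have h1 : (t + 1) * Rn rs ≤ j * Rn rs := Nat.mul_le_mul_right _ hlt
    have : t * Rn rs + Rn rs ≤ pid rs j a := by
      have : (t + 1) * Rn rs = t * Rn rs + Rn rs := by ring
      simp [pid]; omega
    omega

lemma pid_lt_out_range (rs : List ℕ) {t t' : ℕ} (h : t < t') (k a : ℕ) (ha : a ≤ Rn rs) :
    ¬ (t * Rn rs ≤ pid rs t' k ∧ pid rs t' k < t * Rn rs + a) := by
  have h1 : (t + 1) * Rn rs ≤ t' * Rn rs := Nat.mul_le_mul_right _ h
  have : t * Rn rs + Rn rs ≤ pid rs t' k := by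
    have : (t + 1) * Rn rs = t * Rn rs + Rn rs := by ring
    simp [pid]; omega
  omega

lemma pid_ne (rs : List ℕ) {j t : ℕ} (h : j ≠ t) (a : ℕ) : pid rs t a ≠ pid rs j a := by
  simp only [pid]
  intro hc
  have h2 : t * Rn rs = j * Rn rs := by omega
  exact h (Nat.eq_of_mul_eq_mul_right (Rn_pos rs) h2).symm

lemma safe_SETc' {inp : ℕ → Bool} {v : Bool} {m : Bool} (c : Bool) (q : ℕ)
    (rest : List PInstr) (ρ : PEnv) (hq : ρ q = none)
    (h : Safe inp v m rest (Function.update ρ q (some c))) :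
    Safe inp v m (SETc c q ++ rest) ρ := by
  cases c
  · -- SETc false
    simp only [SETc, if_neg (Bool.false_ne_true), List.cons_append]
    refine .splitpos q _ false m hq (by cases m <;> simp) ?_ ?_
    · exact .halt (by simp)
    · simp only [List.append_eq, List.cons_append, List.drop_succ_cons, List.drop_zero]
      exact .jump 5 _ (by simpa using h)
  · -- SETc true
    simp only [SETc, if_pos rfl, List.cons_append]
    refine .splitpos q _ m false hq (by cases m <;> simp) ?_ ?_
    · exact .jump 6 _ (by simpa using h)
    · simp only [List.append_eq, List.cons_append, List.drop_succ_cons, List.drop_zero]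
      exact .halt (by simp)

lemma safe_COPY {inp : ℕ → Bool} {v : Bool} {m : Bool} (q p : ℕ) (bv : Bool)
    (rest : List PInstr) (ρ : PEnv) (hqp : q ≠ p) (hq : ρ q = none) (hp : ρ p = some bv)
    (h : Safe inp v m rest (Function.update ρ q (some bv))) :
    Safe inp v m (COPY q p ++ rest) ρ := by
  have hpT : (Function.update ρ q (some true)) p = some bv := by
    rw [Function.update_of_ne (Ne.symm hqp)]; exact hp
  have hpF : (Function.update ρ q (some false)) p = some bv := by
    rw [Function.update_of_ne (Ne.symm hqp)]; exact hp
  simp only [COPY, List.cons_append]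
  cases bv
  · refine .splitpos q _ false m hq (by cases m <;> simp) ?_ ?_
    · refine .jump 3 _ ?_
      simp only [List.append_eq, List.cons_append, List.drop_succ_cons, List.drop_zero]
      exact .replypos p false _ hpT (.halt (by simp))
    · simp only [List.append_eq, List.cons_append, List.drop_succ_cons, List.drop_zero]
      exact .replypos p false _ hpF (.jump 3 _ (by simpa using h))
  · refine .splitpos q _ m false hq (by cases m <;> simp) ?_ ?_
    · refine .jump 3 _ ?_
      simp only [List.append_eq, List.cons_append, List.drop_succ_cons, List.drop_zero]
      exact .replypos p true _ hpT (.jump 1 _ (by simpa using h))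
    · simp only [List.append_eq, List.cons_append, List.drop_succ_cons, List.drop_zero]
      exact .replypos p true _ hpF (.halt (by simp))

lemma specw_val (rs : List ℕ) (w : Option (Reg × Bool)) (k : ℕ) (s : RegState) :
    (match specw w rs k with
      | some c => c
      | none => s (regOfSlot rs k)) = wEff w s (regOfSlot rs k) := by
  rcases w with _ | ⟨r, c⟩
  · simp [specw, wEff]
  · simp only [specw]
    by_cases h : regOfSlot rs k = r
    · rw [if_pos h, h]
      simp [wEff]
    · rw [if_neg h]
      simp [wEff, Function.update_of_ne h]

lemma gpart_safe (rs : List ℕ) {inp : ℕ → Bool} {v m : Bool} (j t : ℕ)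
    (w : Option (Reg × Bool)) (s s' : RegState) (ρ : PEnv)
    (hjt : j ≠ t)
    (hs' : s' = wEff w s)
    (hfresh : ∀ k, k < Rn rs → ρ (pid rs t k) = none)
    (hcur : ∀ k, k < Rn rs → ρ (pid rs j k) = some (s (regOfSlot rs k))) :
    ∀ n a, Rn rs - a ≤ n → a ≤ Rn rs → ∀ tail : List PInstr,
      Safe inp v m tail (envUpto rs ρ t s' (Rn rs)) →
      Safe inp v m (gpart rs j t w a ++ tail) (envUpto rs ρ t s' a) := by
  intro n
  induction n with
  | zero =>
    intro a ha haR tail htail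
    have : a = Rn rs := by omega
    subst this
    rw [gpart, dif_neg (by omega)]
    simpa using htail
  | succ n IH =>
    intro a ha haR tail htail
    by_cases hlt : a < Rn rs
    · rw [gpart, dif_pos hlt, List.append_assoc]
      have hqnone : envUpto rs ρ t s' a (pid rs t a) = none := by
        rw [envUpto_out rs ρ t s' a (by simp only [pid]; omega)]
        exact hfresh a hlt
      have hrest : Safe inp v m (gpart rs j t w (a+1) ++ tail) (envUpto rs ρ t s' (a+1)) :=
        IH (a+1) (by omega) (by omega) tail htail
      unfold gadget
      cases hsp : specw w rs a with
      | some c =>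
        refine safe_SETc' c (pid rs t a) _ _ hqnone ?_
        have hcval : c = s' (regOfSlot rs a) := by
          have h2 := specw_val rs w a s
          rw [hsp] at h2
          rw [hs']; exact h2
        rw [hcval, envUpto_succ]
        exact hrest
      | none =>
        have hsrc : envUpto rs ρ t s' a (pid rs j a) = some (s (regOfSlot rs a)) := by
          rw [envUpto_out rs ρ t s' a (pid_out_range rs hjt hlt a (le_of_lt hlt))]
          exact hcur a hlt
        refine safe_COPY (pid rs t a) (pid rs j a) (s (regOfSlot rs a)) _ _
          (pid_ne rs hjt a) hqnone hsrc ?_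
        · have hval : s (regOfSlot rs a) = s' (regOfSlot rs a) := by
            have h2 := specw_val rs w a s
            rw [hsp] at h2
            rw [hs']; exact h2
          rw [hval, envUpto_succ]
          exact hrest
    · have : a = Rn rs := by omega
      subst this
      rw [gpart, dif_neg (by omega)]
      simpa using htail

/-! ### Block-level safety -/

lemma envUpto_cur (rs ρ t s') (k : ℕ) (hk : k < Rn rs) :
    envUpto rs ρ t s' (Rn rs) (pid rs t k) = some (s' (regOfSlot rs k)) := by
  simp only [envUpto, pid]
  simp only [show t * Rn rs ≤ t * Rn rs + k ∧ t * Rn rs + k < t * Rn rs + Rn rs from by omega, and_self, if_true]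
  have h : t * Rn rs + k - t * Rn rs = k := by omega
  rw [h]

lemma envUpto_fresh (rs ρ s') {j t : ℕ}
    (hfresh : ∀ t' k, j < t' → ρ (pid rs t' k) = none) (hjt : j < t) :
    ∀ t' k, t < t' → envUpto rs ρ t s' (Rn rs) (pid rs t' k) = none := by
  intro t' k h
  rw [envUpto_out _ _ _ _ _ (pid_lt_out_range rs h k (Rn rs) le_rfl)]
  exact hfresh t' k (lt_trans hjt h)

lemma trans_safe (rs : List ℕ) {inp : ℕ → Bool} {v m : Bool} (L j t : ℕ)
    (w : Option (Reg × Bool)) (o : ℕ) (s s' : RegState) (ρ : PEnv)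
    (hjt : j < t) (htL : t < L) (ho : o + 8 * Rn rs + 1 ≤ Bn rs)
    (hs' : s' = wEff w s)
    (hfresh : ∀ k, k < Rn rs → ρ (pid rs t k) = none)
    (hcur : ∀ k, k < Rn rs → ρ (pid rs j k) = some (s (regOfSlot rs k)))
    (tail : List PInstr)
    (hcont : Safe inp v m (tail.drop ((t - j) * Bn rs - o - 8 * Rn rs - 1))
      (envUpto rs ρ t s' (Rn rs))) :
    Safe inp v m (trans rs L j t w o ++ tail) ρ := by
  rw [trans, if_pos htL, List.append_assoc]
  have hlv : 1 ≤ (t - j) * Bn rs - o - 8 * Rn rs := by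
    have h1 : 1 ≤ t - j := by omega
    have h2 : Bn rs ≤ (t - j) * Bn rs := le_mul_of_one_le_left (Nat.zero_le _) h1
    omega
  have hmain : Safe inp v m ([PInstr.jump ((t - j) * Bn rs - o - 8 * Rn rs)] ++ tail)
      (envUpto rs ρ t s' (Rn rs)) := by
    simp only [List.cons_append, List.nil_append]
    have heq : (t - j) * Bn rs - o - 8 * Rn rs
        = ((t - j) * Bn rs - o - 8 * Rn rs - 1) + 1 := by omega
    rw [heq]
    exact .jump _ _ hcont
  have := gpart_safe rs j t w s s' ρ (Nat.ne_of_lt hjt) hs' hfresh hcur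
    (Rn rs) 0 (by omega) (by omega) _ hmain
  simpa using this

/-- Safety of the code starting at the jump-to-the-true-transfer. -/
lemma safe_L1 (rs : List ℕ) {inp : ℕ → Bool} {v m : Bool} (X : List PInstr) (j t : ℕ)
    (w : Option (Reg × Bool)) (F : List PInstr) (hF : F.length = 8 * Rn rs + 1)
    (s s' : RegState) (ρ : PEnv)
    (hjt : j < t) (htL : t < X.length)
    (hs' : s' = wEff w s)
    (hfresh : ∀ t' k, j < t' → ρ (pid rs t' k) = none)
    (hcur : ∀ k, k < Rn rs → ρ (pid rs j k) = some (s (regOfSlot rs k))) (hj1 : j + 1 ≤ t)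
    (hcont : Safe inp v m (bodyc rs X t) (envUpto rs ρ t s' (Rn rs))) :
    Safe inp v m (.jump (8 * Rn rs + 2) ::
      (F ++ (trans rs X.length j t w (8 * Rn rs + 3) ++ bodyc rs X (j+1)))) ρ := by
  refine .jump (8 * Rn rs + 1) _ ?_
  have hdl : (F ++ (trans rs X.length j t w (8 * Rn rs + 3) ++ bodyc rs X (j+1))).drop
      (8 * Rn rs + 1) = trans rs X.length j t w (8 * Rn rs + 3) ++ bodyc rs X (j+1) := by
    rw [← hF]; exact List.drop_left
  rw [hdl]
  refine trans_safe rs X.length j t w (8 * Rn rs + 3) s s' ρ hjt htL (by simp [Bn]; omega) hs'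
    (fun k hk => hfresh t k hjt) hcur _ ?_
  have harith : (t - j) * Bn rs - (8 * Rn rs + 3) - 8 * Rn rs - 1
      = (t - (j + 1)) * Bn rs := by
    obtain ⟨d, rfl⟩ : ∃ d, t = j + 1 + d := ⟨t - (j+1), by omega⟩
    have h1 : (j + 1 + d - j) * Bn rs = d * Bn rs + Bn rs := by
      have : j + 1 + d - j = d + 1 := by omega
      rw [this]; ring
    have h2 : j + 1 + d - (j + 1) = d := by omega
    rw [h1, h2]
    simp only [Bn]; omega
  rw [harith, bodyc_drop]
  have : j + 1 + (t - (j + 1)) = t := by omega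
  rw [this]
  exact hcont

/-- Safety of the code starting at the false-transfer. -/
lemma safe_L2 (rs : List ℕ) {inp : ℕ → Bool} {v m : Bool} (X : List PInstr) (j t : ℕ)
    (w : Option (Reg × Bool)) (T : List PInstr) (hT : T.length = 8 * Rn rs + 1)
    (s s' : RegState) (ρ : PEnv)
    (hjt : j < t) (htL : t < X.length)
    (hs' : s' = wEff w s)
    (hfresh : ∀ t' k, j < t' → ρ (pid rs t' k) = none)
    (hcur : ∀ k, k < Rn rs → ρ (pid rs j k) = some (s (regOfSlot rs k)))
    (hcont : Safe inp v m (bodyc rs X t) (envUpto rs ρ t s' (Rn rs))) :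
    Safe inp v m (trans rs X.length j t w 2 ++ (T ++ bodyc rs X (j+1))) ρ := by
  refine trans_safe rs X.length j t w 2 s s' ρ hjt htL (by simp [Bn]; omega) hs'
    (fun k hk => hfresh t k hjt) hcur _ ?_
  have harith : (t - j) * Bn rs - 2 - 8 * Rn rs - 1
      = (8 * Rn rs + 1) + (t - (j + 1)) * Bn rs := by
    obtain ⟨d, rfl⟩ : ∃ d, t = j + 1 + d := ⟨t - (j+1), by omega⟩
    have h1 : (j + 1 + d - j) * Bn rs = d * Bn rs + Bn rs := by
      have : j + 1 + d - j = d + 1 := by omega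
      rw [this]; ring
    have h2 : j + 1 + d - (j + 1) = d := by omega
    rw [h1, h2]
    simp only [Bn]; omega
  rw [harith, ← List.drop_drop]
  have hdl : (T ++ bodyc rs X (j+1)).drop (8 * Rn rs + 1) = bodyc rs X (j+1) := by
    rw [← hT]; exact List.drop_left
  rw [hdl, bodyc_drop]
  have : j + 1 + (t - (j + 1)) = t := by omega
  rw [this]
  exact hcont

lemma safe_step_full (rs : List ℕ) {inp : ℕ → Bool} {v : Bool} (X : List PInstr) (j t : ℕ)
    (w : Option (Reg × Bool)) (s s' : RegState) (ρ : PEnv)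
    (hjt : j < t) (htL : t < X.length) (hs' : s' = wEff w s)
    (hfresh : ∀ t' k, j < t' → ρ (pid rs t' k) = none)
    (hcur : ∀ k, k < Rn rs → ρ (pid rs j k) = some (s (regOfSlot rs k)))
    (hcont : Safe inp v true (bodyc rs X t) (envUpto rs ρ t s' (Rn rs))) :
    Safe inp v true (blockOf rs X.length j (.step w t) ++ bodyc rs X (j+1)) ρ := by
  simp only [blockOf, List.append_assoc, List.cons_append]
  refine .jump 0 _ ?_
  simp only [List.drop_zero]
  exact safe_L1 rs X j t w _ (trans_length _ _ _ _ _ _) s s' ρ hjt htL hs' hfresh hcur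
    (by omega) hcont

lemma safe_halt_full (rs : List ℕ) {inp : ℕ → Bool} (X : List PInstr) (j : ℕ)
    (s : RegState) (ρ : PEnv)
    (hcurK : ρ (pid rs j rs.length) = some (s Reg.out)) :
    Safe inp (s Reg.out) true (blockOf rs X.length j .halt ++ bodyc rs X (j+1)) ρ := by
  simp only [blockOf, List.append_assoc, List.cons_append]
  refine .replypos _ (s Reg.out) _ hcurK ?_
  cases ho : s Reg.out
  · -- output false: we step to a halt, obligation vacuous
    simp only [Bool.false_eq_true, if_false, List.drop_succ_cons, List.drop_zero,
      List.cons_append]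
    exact .halt (fun _ => rfl)
  · -- output true: set out and halt
    simp only [if_true, List.cons_append]
    refine .jump (8 * Rn rs + 1) _ ?_
    simp only [List.nil_append, List.drop_succ_cons]
    rw [List.drop_left' List.length_replicate]
    exact .setout _ rfl (.halt (by simp))

lemma exec_lt {X : List PInstr} {t : ℕ} {s sfin : RegState}
    (h : exec (X.drop t) s = some sfin) : t < X.length := by
  by_contra hc
  rw [List.drop_eq_nil_of_le (by omega)] at h
  simp [exec] at h

lemma update_inp {s : RegState} {r : Reg} {c : Bool} (hr : ∀ i, r ≠ Reg.inp i) (i : ℕ) :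
    Function.update s r c (Reg.inp i) = s (Reg.inp i) :=
  Function.update_of_ne (fun h => hr i h.symm) _ _

lemma brbasic_set_ne_inp {r : Reg} {c : Bool} (h : BrBasic (.set r c)) :
    ∀ i, r ≠ Reg.inp i := by
  intro i
  cases r with
  | inp i' => simp [BrBasic] at h
  | aux i' => simp
  | out => simp

lemma drop_drop' (X : List PInstr) (a b c : ℕ) (h : a + b = c) :
    (X.drop a).drop b = X.drop c := by
  rw [List.drop_drop]; congr 1; try omega

lemma main_safe (X : List PInstr) (hX : ∀ u ∈ X, InstrBasicOK BrBasic u)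
    (inp : ℕ → Bool) (sfin : RegState) :
    ∀ n j (s : RegState) (ρ : PEnv), X.length - j ≤ n →
    exec (X.drop j) s = some sfin →
    (∀ i, s (.inp i) = inp i) →
    (∀ k, k < Rn (auxIdxs X) → ρ (pid (auxIdxs X) j k)
        = some (s (regOfSlot (auxIdxs X) k))) →
    (∀ t k, j < t → ρ (pid (auxIdxs X) t k) = none) →
    Safe inp (sfin Reg.out) true (bodyc (auxIdxs X) X j) ρ := by
  set rs := auxIdxs X with hrs
  intro n
  induction n with
  | zero =>
    intro j s ρ hn hexec _ _ _
    have := exec_lt hexec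
    omega
  | succ n IH =>
    intro j s ρ hn hexec hinp hcur hfresh
    have hj : j < X.length := exec_lt hexec
    rw [bodyc, dif_pos hj]
    have hBr : InstrBasicOK BrBasic X[j] := hX _ (List.getElem_mem hj)
    rw [List.drop_eq_getElem_cons hj] at hexec
    -- generic continuation builder for unconditional steps
    have hstep : ∀ (t : ℕ) (w : Option (Reg × Bool)) (s' : RegState),
        j < t → s' = wEff w s → (∀ i, s' (.inp i) = inp i) →
        exec (X.drop t) s' = some sfin →
        Safe inp (sfin Reg.out) true
          (blockOf rs X.length j (.step w t) ++ bodyc rs X (j+1)) ρ := by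
      intro t w s' hjt hs' hinp' hnext
      have htL : t < X.length := exec_lt hnext
      have hcont := IH t s' (envUpto rs ρ t s' (Rn rs)) (by omega) hnext hinp'
        (fun k hk => envUpto_cur rs ρ t s' k hk)
        (fun t' k h => envUpto_fresh rs ρ s' hfresh hjt t' k h)
      exact safe_step_full rs X j t w s s' ρ hjt htL hs' hfresh hcur hcont
    have hcontb : ∀ (t : ℕ), j < t → exec (X.drop t) s = some sfin →
        Safe inp (sfin Reg.out) true (bodyc rs X t) (envUpto rs ρ t s (Rn rs)) := by
      intro t hjt hnext
      exact IH t s (envUpto rs ρ t s (Rn rs)) (by omega) hnext hinp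
        (fun k hk => envUpto_cur rs ρ t s k hk)
        (fun t' k h => envUpto_fresh rs ρ s hfresh hjt t' k h)
    cases hu : X[j] with
    | plain a =>
      rw [hu] at hexec hBr
      cases a with
      | get r =>
        simp only [exec, BInstr.isSplitReply, Bool.false_eq_true, if_false,
          BInstr.effect] at hexec
        simp only [descOf]
        exact hstep (j+1) none s (by omega) rfl hinp hexec
      | set r c =>
        simp only [exec, BInstr.isSplitReply, Bool.false_eq_true, if_false,
          BInstr.effect] at hexec
        simp only [descOf]
        have hri : ∀ i, r ≠ Reg.inp i := brbasic_set_ne_inp hBr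
        exact hstep (j+1) (some (r, c)) (Function.update s r c) (by omega) rfl
          (fun i => by rw [update_inp hri]; exact hinp i) hexec
      | split p => simp [InstrBasicOK, BrBasic] at hBr
      | reply p => simp [InstrBasicOK, BrBasic] at hBr
    | pos a =>
      rw [hu] at hexec hBr
      cases a with
      | get r =>
        simp only [exec, BInstr.isSplitReply, Bool.false_eq_true, if_false,
          BInstr.effect, BInstr.rpl] at hexec
        simp only [descOf]
        cases r with
        | inp i =>
          simp only [blockOf, testInstr, List.append_assoc, List.cons_append, List.nil_append]
          refine .getpos i _ ?_
          simp only [hinp i] at hexec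
          cases hv : inp i with
          | true =>
            rw [hv] at hexec
            simp only [if_true] at hexec ⊢
            have htL : j + 1 < X.length := exec_lt hexec
            exact safe_L1 rs X j (j+1) none _ (trans_length _ _ _ _ _ _) s s ρ
              (by omega) htL rfl hfresh hcur (by omega)
              (hcontb (j+1) (by omega) hexec)
          | false =>
            rw [hv] at hexec
            simp only [Bool.false_eq_true, if_false] at hexec ⊢
            rw [drop_drop' X (j+1) 1 (j+2) (by omega)] at hexec
            simp only [List.drop_succ_cons, List.drop_zero, List.nil_append]
            have htL : j + 2 < X.length := exec_lt hexec
            exact safe_L2 rs X j (j+2) none _ (trans_length _ _ _ _ _ _) s s ρ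
              (by omega) htL rfl hfresh hcur (hcontb (j+2) (by omega) hexec)
        | aux i =>
          have hmem : i ∈ rs := by
            rw [hrs]
            exact List.mem_flatMap.mpr ⟨X[j], List.getElem_mem hj,
              by rw [hu]; simp [collect, collectB]⟩
          have hidx : rs.idxOf i < rs.length := List.idxOf_lt_length_iff.mpr hmem
          have hreg : regOfSlot rs (rs.idxOf i) = .aux i := by
            rw [regOfSlot, dif_pos hidx]
            congr 1
            exact List.getElem_idxOf hidx
          have hval : ρ (pid rs j (rs.idxOf i)) = some (s (.aux i)) := by
            rw [hcur _ (by simp only [Rn]; omega), hreg]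
          simp only [blockOf, testInstr, List.append_assoc, List.cons_append, List.nil_append]
          refine .replypos _ (s (.aux i)) _ hval ?_
          cases hv : s (Reg.aux i) with
          | true =>
            simp only [hv] at hexec
            simp only [if_true] at hexec ⊢
            have htL : j + 1 < X.length := exec_lt hexec
            exact safe_L1 rs X j (j+1) none _ (trans_length _ _ _ _ _ _) s s ρ
              (by omega) htL rfl hfresh hcur (by omega)
              (hcontb (j+1) (by omega) hexec)
          | false =>
            simp only [hv] at hexec
            simp only [Bool.false_eq_true, if_false] at hexec ⊢
            rw [drop_drop' X (j+1) 1 (j+2) (by omega)] at hexec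
            simp only [List.drop_succ_cons, List.drop_zero, List.nil_append]
            have htL : j + 2 < X.length := exec_lt hexec
            exact safe_L2 rs X j (j+2) none _ (trans_length _ _ _ _ _ _) s s ρ
              (by omega) htL rfl hfresh hcur (hcontb (j+2) (by omega) hexec)
        | out => simp [InstrBasicOK, BrBasic] at hBr
      | set r c =>
        have hri : ∀ i, r ≠ Reg.inp i := brbasic_set_ne_inp hBr
        simp only [exec, BInstr.isSplitReply, Bool.false_eq_true, if_false,
          BInstr.effect, BInstr.rpl] at hexec
        simp only [descOf]
        cases c with
        | true =>
          simp only [if_true] at hexec ⊢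
          exact hstep (j+1) (some (r, true)) (Function.update s r true) (by omega) rfl
            (fun i => by rw [update_inp hri]; exact hinp i) hexec
        | false =>
          simp only [Bool.false_eq_true, if_false] at hexec ⊢
          rw [drop_drop' X (j+1) 1 (j+2) (by omega)] at hexec
          exact hstep (j+2) (some (r, false)) (Function.update s r false) (by omega) rfl
            (fun i => by rw [update_inp hri]; exact hinp i) hexec
      | split p => simp [InstrBasicOK, BrBasic] at hBr
      | reply p => simp [InstrBasicOK, BrBasic] at hBr
    | neg a =>
      rw [hu] at hexec hBr
      cases a with
      | get r =>
        simp only [exec, BInstr.isSplitReply, Bool.false_eq_true, if_false,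
          BInstr.effect, BInstr.rpl] at hexec
        simp only [descOf]
        cases r with
        | inp i =>
          simp only [blockOf, testInstr, List.append_assoc, List.cons_append, List.nil_append]
          refine .getpos i _ ?_
          simp only [hinp i] at hexec
          cases hv : inp i with
          | true =>
            rw [hv] at hexec
            simp only [if_true] at hexec ⊢
            rw [drop_drop' X (j+1) 1 (j+2) (by omega)] at hexec
            have htL : j + 2 < X.length := exec_lt hexec
            exact safe_L1 rs X j (j+2) none _ (trans_length _ _ _ _ _ _) s s ρ
              (by omega) htL rfl hfresh hcur (by omega)
              (hcontb (j+2) (by omega) hexec)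
          | false =>
            rw [hv] at hexec
            simp only [Bool.false_eq_true, if_false] at hexec ⊢
            simp only [List.drop_succ_cons, List.drop_zero, List.nil_append]
            have htL : j + 1 < X.length := exec_lt hexec
            exact safe_L2 rs X j (j+1) none _ (trans_length _ _ _ _ _ _) s s ρ
              (by omega) htL rfl hfresh hcur (hcontb (j+1) (by omega) hexec)
        | aux i =>
          have hmem : i ∈ rs := by
            rw [hrs]
            exact List.mem_flatMap.mpr ⟨X[j], List.getElem_mem hj,
              by rw [hu]; simp [collect, collectB]⟩
          have hidx : rs.idxOf i < rs.length := List.idxOf_lt_length_iff.mpr hmem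
          have hreg : regOfSlot rs (rs.idxOf i) = .aux i := by
            rw [regOfSlot, dif_pos hidx]
            congr 1
            exact List.getElem_idxOf hidx
          have hval : ρ (pid rs j (rs.idxOf i)) = some (s (.aux i)) := by
            rw [hcur _ (by simp only [Rn]; omega), hreg]
          simp only [blockOf, testInstr, List.append_assoc, List.cons_append, List.nil_append]
          refine .replypos _ (s (.aux i)) _ hval ?_
          cases hv : s (Reg.aux i) with
          | true =>
            simp only [hv] at hexec
            simp only [if_true] at hexec ⊢
            rw [drop_drop' X (j+1) 1 (j+2) (by omega)] at hexec
            have htL : j + 2 < X.length := exec_lt hexec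
            exact safe_L1 rs X j (j+2) none _ (trans_length _ _ _ _ _ _) s s ρ
              (by omega) htL rfl hfresh hcur (by omega)
              (hcontb (j+2) (by omega) hexec)
          | false =>
            simp only [hv] at hexec
            simp only [Bool.false_eq_true, if_false] at hexec ⊢
            simp only [List.drop_succ_cons, List.drop_zero, List.nil_append]
            have htL : j + 1 < X.length := exec_lt hexec
            exact safe_L2 rs X j (j+1) none _ (trans_length _ _ _ _ _ _) s s ρ
              (by omega) htL rfl hfresh hcur (hcontb (j+1) (by omega) hexec)
        | out => simp [InstrBasicOK, BrBasic] at hBr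
      | set r c =>
        have hri : ∀ i, r ≠ Reg.inp i := brbasic_set_ne_inp hBr
        simp only [exec, BInstr.isSplitReply, Bool.false_eq_true, if_false,
          BInstr.effect, BInstr.rpl] at hexec
        simp only [descOf]
        cases c with
        | true =>
          simp only [if_true] at hexec ⊢
          rw [drop_drop' X (j+1) 1 (j+2) (by omega)] at hexec
          exact hstep (j+2) (some (r, true)) (Function.update s r true) (by omega) rfl
            (fun i => by rw [update_inp hri]; exact hinp i) hexec
        | false =>
          simp only [Bool.false_eq_true, if_false] at hexec ⊢
          exact hstep (j+1) (some (r, false)) (Function.update s r false) (by omega) rfl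
            (fun i => by rw [update_inp hri]; exact hinp i) hexec
      | split p => simp [InstrBasicOK, BrBasic] at hBr
      | reply p => simp [InstrBasicOK, BrBasic] at hBr
    | jump l =>
      rw [hu] at hexec
      cases l with
      | zero => simp [exec] at hexec
      | succ l =>
        simp only [exec] at hexec
        rw [drop_drop' X (j+1) l (j+1+l) (by omega)] at hexec
        simp only [descOf]
        exact hstep (j+1+l) none s (by omega) rfl hinp hexec
    | halt =>
      rw [hu] at hexec
      simp only [exec, Option.some.injEq] at hexec
      subst hexec
      simp only [descOf]
      have hcurK : ρ (pid rs j rs.length) = some (s Reg.out) := by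
        rw [hcur rs.length (by simp only [Rn]; omega)]
        rw [regOfSlot, dif_neg (lt_irrefl _)]
      exact safe_halt_full rs X j s ρ hcurK

lemma prologue_safe {inp : ℕ → Bool} {v m : Bool} (rs : List ℕ) (s0 : RegState)
    (hs0 : ∀ k, k < Rn rs → s0 (regOfSlot rs k) = false) :
    ∀ n a, Rn rs - a ≤ n → a ≤ Rn rs → ∀ tail : List PInstr,
      Safe inp v m tail (envUpto rs (fun _ => none) 0 s0 (Rn rs)) →
      Safe inp v m (prologue rs a ++ tail) (envUpto rs (fun _ => none) 0 s0 a) := by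
  intro n
  induction n with
  | zero =>
    intro a ha haR tail htail
    have : a = Rn rs := by omega
    subst this
    rw [prologue, dif_neg (by omega)]
    simpa using htail
  | succ n IH =>
    intro a ha haR tail htail
    by_cases hlt : a < Rn rs
    · rw [prologue, dif_pos hlt, List.append_assoc]
      have hq : envUpto rs (fun _ => none) 0 s0 a (pid rs 0 a) = none := by
        rw [envUpto_out _ _ _ _ _ (by simp only [pid]; omega)]
      refine safe_SETc' false (pid rs 0 a) _ _ hq ?_
      have hv0 : (false : Bool) = s0 (regOfSlot rs a) := (hs0 a hlt).symm
      rw [hv0, envUpto_succ]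
      exact IH (a+1) (by omega) (by omega) tail htail
    · have : a = Rn rs := by omega
      subst this
      rw [prologue, dif_neg (by omega)]
      simpa using htail

lemma envUpto0_fresh (rs : List ℕ) (ρ : PEnv) (s' : RegState) (t k : ℕ) (ht : 0 < t) :
    envUpto rs ρ 0 s' (Rn rs) (pid rs t k) = ρ (pid rs t k) := by
  apply envUpto_out
  have hle : Rn rs ≤ t * Rn rs := Nat.le_mul_of_pos_left _ ht
  simp only [pid]
  omega

lemma transl_computes {nn : ℕ} (f : (Fin nn → Bool) → Bool) (X : List PInstr)
    (hbr : ISbr X) (hc : Computes f X) : SplittingComputes f (transl X) := by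
  intro b
  obtain ⟨sf, hex, hout⟩ := hc b
  set rs := auxIdxs X with hrs
  set inp : ℕ → Bool := fun i => initState nn b (.inp i) with hinp
  set s0 : RegState := initState nn b with hs0def
  have hs0 : ∀ k, k < Rn rs → s0 (regOfSlot rs k) = false := by
    intro k hk
    rw [hs0def, regOfSlot]
    split <;> rfl
  have hsafe : Safe inp (sf Reg.out) true (transl X) (fun _ => none) := by
    rw [transl]
    have hmain := main_safe X hbr.2 inp sf X.length 0 s0
      (envUpto rs (fun _ => none) 0 s0 (Rn rs)) (by omega)
      (by simpa using hex) (fun i => rfl)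
      (fun k hk => envUpto_cur rs (fun _ => none) 0 s0 k hk)
      (fun t k ht => envUpto0_fresh rs (fun _ => none) s0 t k ht)
    have hpro := prologue_safe rs s0 hs0 (Rn rs) 0 (by omega) (by omega) _ hmain
    simpa using hpro
  obtain ⟨fuel, s', hsex, c1, c2, c3⟩ := sched inp (sf Reg.out)
    (wt [(transl X, fun _ => none)]) [(transl X, fun _ => none)] s0 le_rfl
    (by
      intro t ht
      rcases List.mem_cons.mp ht with rfl | ht
      · exact ⟨true, hsafe⟩
      · exact absurd ht List.not_mem_nil)
    (fun i => rfl)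
  refine ⟨fuel, s', hsex, ?_⟩
  rw [← hout]
  have h0 : s0 Reg.out = false := rfl
  cases hv : sf Reg.out
  · cases h' : s' Reg.out
    · rfl
    · rcases c2 h' with h | h
      · rw [h0] at h; exact absurd h (by simp)
      · rw [hv] at h; exact absurd h (by simp)
  · exact c3 hv ⟨(transl X, fun _ => none), List.mem_cons_self, hsafe⟩

/-! ### Syntactic facts about the translation -/

lemma mem_SETc {u : PInstr} {c q} (h : u ∈ SETc c q) : InstrBasicOK SisBasic u := by
  cases c <;> simp [SETc] at h <;>
    rcases h with rfl | rfl | rfl | rfl | rfl | rfl | rfl | rfl <;>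
    simp [InstrBasicOK, SisBasic]

lemma mem_COPY {u : PInstr} {q p} (h : u ∈ COPY q p) : InstrBasicOK SisBasic u := by
  simp [COPY] at h
  rcases h with rfl | rfl | rfl | rfl | rfl | rfl | rfl | rfl <;>
    simp [InstrBasicOK, SisBasic]

lemma mem_gadget {u : PInstr} {rs j t k w} (h : u ∈ gadget rs j t k w) :
    InstrBasicOK SisBasic u := by
  rw [gadget] at h
  cases hs : specw w rs k <;> rw [hs] at h
  · exact mem_COPY h
  · exact mem_SETc h

lemma mem_gpart {rs j t w} : ∀ n a, Rn rs - a ≤ n → ∀ u ∈ gpart rs j t w a,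
    InstrBasicOK SisBasic u := by
  intro n
  induction n with
  | zero =>
    intro a ha u hu
    rw [gpart, dif_neg (by omega)] at hu
    exact absurd hu List.not_mem_nil
  | succ n IH =>
    intro a ha u hu
    rw [gpart] at hu
    by_cases hlt : a < Rn rs
    · rw [dif_pos hlt] at hu
      rcases List.mem_append.mp hu with hu | hu
      · exact mem_gadget hu
      · exact IH (a+1) (by omega) u hu
    · rw [dif_neg hlt] at hu
      exact absurd hu List.not_mem_nil

lemma mem_trans {u : PInstr} {rs L j t w o} (h : u ∈ trans rs L j t w o) :
    InstrBasicOK SisBasic u := by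
  rw [trans] at h
  split at h
  · rcases List.mem_append.mp h with h | h
    · exact mem_gpart (Rn rs) 0 (by omega) u h
    · rcases List.mem_singleton.mp h with rfl
      simp [InstrBasicOK]
  · rw [List.eq_of_mem_replicate h]
    simp [InstrBasicOK]

lemma mem_testInstr {u : PInstr} {rs j r} (h : u = testInstr rs j r) :
    InstrBasicOK SisBasic u := by
  subst h
  cases r <;> simp [testInstr, InstrBasicOK, SisBasic]

lemma mem_blockOf {u : PInstr} {rs L j d} (h : u ∈ blockOf rs L j d) :
    InstrBasicOK SisBasic u := by
  cases d with
  | step w t =>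
    simp only [blockOf, List.append_assoc, List.cons_append, List.mem_cons,
      List.mem_append, List.nil_append] at h
    rcases h with rfl | rfl | h | h
    · simp [InstrBasicOK]
    · simp [InstrBasicOK]
    · exact mem_trans h
    · exact mem_trans h
  | branch r tT tF =>
    simp only [blockOf, List.append_assoc, List.cons_append, List.mem_cons,
      List.mem_append, List.nil_append] at h
    rcases h with rfl | rfl | h | h
    · exact mem_testInstr rfl
    · simp [InstrBasicOK]
    · exact mem_trans h
    · exact mem_trans h
  | halt =>
    rw [blockOf] at h
    rcases List.mem_append.mp h with h | h
    · rcases List.mem_append.mp h with h | h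
      · simp at h
        rcases h with rfl | rfl <;> simp [InstrBasicOK, SisBasic]
      · rcases List.mem_cons.mp h with rfl | h
        · simp [InstrBasicOK]
        · rw [List.eq_of_mem_replicate h]; simp [InstrBasicOK]
    · rcases List.mem_append.mp h with h | h
      · simp at h
        rcases h with rfl | rfl <;> simp [InstrBasicOK, SisBasic]
      · rw [List.eq_of_mem_replicate h]; simp [InstrBasicOK]
  | dead =>
    rw [blockOf] at h
    rw [List.eq_of_mem_replicate h]
    simp [InstrBasicOK]

lemma mem_bodyc {rs X} : ∀ n j, X.length - j ≤ n → ∀ u ∈ bodyc rs X j,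
    InstrBasicOK SisBasic u := by
  intro n
  induction n with
  | zero =>
    intro j hj u hu
    rw [bodyc, dif_neg (by omega)] at hu
    exact absurd hu List.not_mem_nil
  | succ n IH =>
    intro j hj u hu
    rw [bodyc] at hu
    by_cases hlt : j < X.length
    · rw [dif_pos hlt] at hu
      rcases List.mem_append.mp hu with hu | hu
      · exact mem_blockOf hu
      · exact IH (j+1) (by omega) u hu
    · rw [dif_neg hlt] at hu
      exact absurd hu List.not_mem_nil

lemma mem_prologue {rs} : ∀ n a, Rn rs - a ≤ n → ∀ u ∈ prologue rs a,
    InstrBasicOK SisBasic u := by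
  intro n
  induction n with
  | zero =>
    intro a ha u hu
    rw [prologue, dif_neg (by omega)] at hu
    exact absurd hu List.not_mem_nil
  | succ n IH =>
    intro a ha u hu
    rw [prologue] at hu
    by_cases hlt : a < Rn rs
    · rw [dif_pos hlt] at hu
      rcases List.mem_append.mp hu with hu | hu
      · exact mem_SETc hu
      · exact IH (a+1) (by omega) u hu
    · rw [dif_neg hlt] at hu
      exact absurd hu List.not_mem_nil

lemma transl_SISbr (X : List PInstr) : SISbr (transl X) := by
  constructor
  · have h8 : 8 ≤ (transl X).length := by
      rw [transl, List.length_append, prologue_length (auxIdxs X) (Rn (auxIdxs X)) 0 (by omega)]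
      have := Rn_pos (auxIdxs X)
      omega
    intro hc
    rw [hc] at h8
    simp at h8
  · intro u hu
    rcases List.mem_append.mp hu with hu | hu
    · exact mem_prologue (rs := auxIdxs X) (Rn (auxIdxs X)) 0 (by omega) u hu
    · exact mem_bodyc (rs := auxIdxs X) X.length 0 (by omega) u hu

lemma collectB_length (a : BInstr) : (collectB a).length ≤ 1 := by
  cases a with
  | get r => cases r <;> simp [collectB]
  | set r c => cases r <;> simp [collectB]
  | split p => simp [collectB]
  | reply p => simp [collectB]

lemma collect_length (u : PInstr) : (collect u).length ≤ 1 := by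
  cases u with
  | plain a => exact collectB_length a
  | pos a => exact collectB_length a
  | neg a => exact collectB_length a
  | jump l => simp [collect]
  | halt => simp [collect]

lemma auxIdxs_length_le (X : List PInstr) : (auxIdxs X).length ≤ X.length := by
  induction X with
  | nil => simp [auxIdxs]
  | cons u X IH =>
    have heq : auxIdxs (u :: X) = collect u ++ auxIdxs X := by
      simp [auxIdxs]
    rw [heq, List.length_append]
    have := collect_length u
    simp only [List.length_cons]
    omega

lemma transl_length (X : List PInstr) :
    (transl X).length = 8 * Rn (auxIdxs X) + X.length * Bn (auxIdxs X) := by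
  rw [transl, List.length_append,
    prologue_length (auxIdxs X) (Rn (auxIdxs X)) 0 (by omega),
    bodyc_length (auxIdxs X) X X.length 0 (by omega)]
  simp

lemma transl_length_le (X : List PInstr) :
    (transl X).length ≤ 16 * X.length ^ 2 + 28 * X.length + 8 := by
  rw [transl_length]
  have h1 : Rn (auxIdxs X) ≤ X.length + 1 := by
    have := auxIdxs_length_le X
    simp only [Rn]; omega
  have h2 : Bn (auxIdxs X) ≤ 16 * X.length + 20 := by
    simp only [Bn]; omega
  have h3 : X.length * Bn (auxIdxs X) ≤ X.length * (16 * X.length + 20) :=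
    Nat.mul_le_mul_left _ h2
  have h4 : X.length * (16 * X.length + 20) = 16 * X.length ^ 2 + 20 * X.length := by
    ring
  omega

end S6


/-- Theorem 8 of the paper: PLIS ⊆ PLSIS. -/
theorem statement6 (F : (n : ℕ) → (Fin n → Bool) → Bool) (h : PLIS F) :
    PLSIS F := by
  obtain ⟨hp, hX⟩ := h
  refine ⟨16 * hp ^ 2 + 28 * hp + 8, fun n => ?_⟩
  obtain ⟨X, hbr, hcomp, hlen⟩ := hX n
  refine ⟨S6.transl X, S6.transl_SISbr X, S6.transl_computes (F n) X hbr hcomp, ?_⟩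
  have h1 := S6.transl_length_le X
  have h2 : Polynomial.eval n (16 * hp ^ 2 + 28 * hp + 8)
      = 16 * (hp.eval n) ^ 2 + 28 * hp.eval n + 8 := by
    simp [Polynomial.eval_add, Polynomial.eval_mul, Polynomial.eval_pow,
      Polynomial.eval_ofNat]
  rw [h2]
  have hsq : X.length ^ 2 ≤ (hp.eval n) ^ 2 := Nat.pow_le_pow_left hlen 2
  omega
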